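/- Let r ≥ 2, h a positive integer, and x_0, ..., x_{r-1}, x_r nonnegative integers each with base-h digits x_{i,j} < h/r for j = 0, ..., t. If x_0 + x_1 + ... + x_{r-1} = r·x_r, then for every digit position j, x_{0,j} + x_{1,j} + ... + x_{r-1,j} = r·x_{r,j}. -/

import Mathlib

/-- Uniqueness of base-`h` representation with digits `< h`. -/
lemma base_repr_unique (h : ℕ) (hh : 2 ≤ h) :
    ∀ (n : ℕ) (a b : ℕ → ℕ), (∀ j < n, a j < h) → (∀ j < n, b j < h) →
    (∑ j ∈ Finset.range n, a j * h ^ j) = (∑ j ∈ Finset.range n, b j * h ^ j) →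
    ∀ j < n, a j = b j := by
  intro n
  induction n with
  | zero => intro a b _ _ _ j hj; omega
  | succ n ih =>
    intro a b ha hb hsum j hj
    rw [Finset.sum_range_succ', Finset.sum_range_succ'] at hsum
    have ht : ∀ (c : ℕ → ℕ), (∑ i ∈ Finset.range n, c (i + 1) * h ^ (i + 1))
        = (∑ i ∈ Finset.range n, c (i + 1) * h ^ i) * h := by
      intro c
      rw [Finset.sum_mul]
      exact Finset.sum_congr rfl fun i _ => by ring
    rw [ht a, ht b, pow_zero, mul_one, mul_one] at hsum
    have ha0 : a 0 < h := ha 0 (Nat.succ_pos n)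
    have hb0 : b 0 < h := hb 0 (Nat.succ_pos n)
    set A := ∑ i ∈ Finset.range n, a (i + 1) * h ^ i with hA
    set B := ∑ i ∈ Finset.range n, b (i + 1) * h ^ i with hB
    have h0 : a 0 = b 0 := by
      have h1 : (a 0 + A * h) % h = a 0 := by
        rw [Nat.add_mul_mod_self_right, Nat.mod_eq_of_lt ha0]
      have h2 : (b 0 + B * h) % h = b 0 := by
        rw [Nat.add_mul_mod_self_right, Nat.mod_eq_of_lt hb0]
      rw [Nat.add_comm (A * h), Nat.add_comm (B * h)] at hsum
      rw [← h1, ← h2, hsum]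
    have hAB : A = B := by
      have h1 : A * h = B * h := by omega
      exact Nat.eq_of_mul_eq_mul_right (by omega) h1
    rcases Nat.eq_zero_or_pos j with hj0 | hjpos
    · subst hj0; exact h0
    · obtain ⟨k, rfl⟩ := Nat.exists_eq_add_of_lt hjpos
      rw [Nat.zero_add] at *
      exact ih (fun i => a (i + 1)) (fun i => b (i + 1))
        (fun i hi => ha (i + 1) (by omega)) (fun i hi => hb (i + 1) (by omega))
        hAB k (by omega)

theorem statement2 (r h t : ℕ) (hr : 2 ≤ r) (hh : 1 ≤ h)
    (x : ℕ → ℕ) (X : ℕ → ℕ → ℕ)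
    (hrepr : ∀ i ≤ r, x i = ∑ j ∈ Finset.range (t + 1), X i j * h ^ j)
    (hdig : ∀ i ≤ r, ∀ j ≤ t, r * X i j < h)
    (hsum : (∑ i ∈ Finset.range r, x i) = r * x r) :
    ∀ j ≤ t, (∑ i ∈ Finset.range r, X i j) = r * X r j := by
  intro j hj
  rcases Nat.lt_or_ge h 2 with h1 | h2
  · -- h = 1: all digits are 0
    have hz : ∀ i ≤ r, X i j = 0 := by
      intro i hi
      have := hdig i hi j hj
      nlinarith
    rw [hz r le_rfl, Finset.sum_eq_zero (fun i hi => hz i (le_of_lt (Finset.mem_range.mp hi)))]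
    ring
  · -- h ≥ 2: use uniqueness of base-h representation
    have hlt1 : ∀ j' < t + 1, (∑ i ∈ Finset.range r, X i j') < h := by
      intro j' hj'
      have key : ∀ i < r, X i j' ≤ (h - 1) / r := by
        intro i hi
        have h3 := hdig i (le_of_lt hi) j' (by omega)
        rw [mul_comm] at h3
        exact Nat.le_div_iff_mul_le (by omega) |>.mpr (by omega)
      calc ∑ i ∈ Finset.range r, X i j' ≤ ∑ i ∈ Finset.range r, (h - 1) / r :=
            Finset.sum_le_sum (fun i hi => key i (Finset.mem_range.mp hi))
        _ = r * ((h - 1) / r) := by rw [Finset.sum_const, Finset.card_range, smul_eq_mul]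
        _ ≤ h - 1 := Nat.mul_div_le _ _
        _ < h := by omega
    have hlt2 : ∀ j' < t + 1, r * X r j' < h := fun j' hj' =>
      hdig r le_rfl j' (by omega)
    have hval : (∑ j' ∈ Finset.range (t + 1), (∑ i ∈ Finset.range r, X i j') * h ^ j')
        = ∑ j' ∈ Finset.range (t + 1), (r * X r j') * h ^ j' := by
      calc ∑ j' ∈ Finset.range (t + 1), (∑ i ∈ Finset.range r, X i j') * h ^ j'
          = ∑ j' ∈ Finset.range (t + 1), ∑ i ∈ Finset.range r, X i j' * h ^ j' := by
            refine Finset.sum_congr rfl fun j' _ => ?_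
            rw [Finset.sum_mul]
        _ = ∑ i ∈ Finset.range r, ∑ j' ∈ Finset.range (t + 1), X i j' * h ^ j' :=
            Finset.sum_comm
        _ = ∑ i ∈ Finset.range r, x i := by
            refine Finset.sum_congr rfl fun i hi => ?_
            rw [hrepr i (le_of_lt (Finset.mem_range.mp hi))]
        _ = r * x r := hsum
        _ = r * ∑ j' ∈ Finset.range (t + 1), X r j' * h ^ j' := by rw [hrepr r le_rfl]
        _ = ∑ j' ∈ Finset.range (t + 1), (r * X r j') * h ^ j' := by
            rw [Finset.mul_sum]
            exact Finset.sum_congr rfl fun j' _ => by ring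
    exact base_repr_unique h h2 (t + 1) _ _ hlt1 hlt2 hval j (by omega)
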